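/- Šidák FDR property: Let A^S be the Šidák multiple decision size function with components A^S_m(α) = 1 − (1 − α)^{1/M} for all m ∈ 𝓜, where M = |𝓜|. Then for every multiple decision process Δ satisfying (D1)–(D4), every probability measure P (i.e., every partition 𝓜 = 𝓜₀ ∪ 𝓜₁), and every q ∈ [0,1], E_P[F(α*(q; Δ, A^S))] ≤ q. -/

import Mathlib

/-!
Statement 3: Šidák FDR property. For the Šidák multiple decision size function
`A^S_m(α) = 1 - (1-α)^{1/M}`, any multiple decision process satisfying (D1)–(D4),
any probability measure P (i.e. any partition 𝓜 = 𝓜₀ ∪ 𝓜₁), and any q ∈ [0,1],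
E_P[F(α*(q; Δ, A^S))] ≤ q.
-/

open MeasureTheory ProbabilityTheory Function Set

noncomputable section

/-- The Šidák multiple decision size function `A^S_m(α) = 1 - (1-α)^{1/M}`, `M = |𝓜|`. -/
def sidakA (ι : Type*) [Fintype ι] : ι → ℝ → ℝ :=
  fun _ α => 1 - (1 - α) ^ ((Fintype.card ι : ℝ)⁻¹)

/-- The number of false discoveries `S₀(α) = ∑_{m ∈ 𝓜₀} δ_m(A_m(α))`. -/
def Szero {X ι : Type*} [Fintype ι] (M0 : Finset ι) (A : ι → ℝ → ℝ)
    (δ : ι → ℝ → X → ℝ) (α : ℝ) (x : X) : ℝ :=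
  ∑ m ∈ M0, δ m (A m α) x

/-- The total number of discoveries `S(α) = ∑_{m ∈ 𝓜} δ_m(A_m(α))`. -/
def Stot {X ι : Type*} [Fintype ι] (A : ι → ℝ → ℝ)
    (δ : ι → ℝ → X → ℝ) (α : ℝ) (x : X) : ℝ :=
  ∑ m, δ m (A m α) x

/-- The false discovery proportion `F(α) = (S₀(α)/S(α))·I{S(α) > 0}` (with `0/0 = 0`). -/
def Fprop {X ι : Type*} [Fintype ι] (M0 : Finset ι) (A : ι → ℝ → ℝ)
    (δ : ι → ℝ → X → ℝ) (α : ℝ) (x : X) : ℝ :=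
  if 0 < Stot A δ α x then Szero M0 A δ α x / Stot A δ α x else 0

/-- The last crossing time `α*(q) = sup {α ∈ [0,1] : ∑_m A_m(α) ≤ q·S(α)}`. -/
def alphaStar {X ι : Type*} [Fintype ι] (A : ι → ℝ → ℝ)
    (δ : ι → ℝ → X → ℝ) (q : ℝ) (x : X) : ℝ :=
  sSup (insert 0 {α ∈ Set.Icc (0:ℝ) 1 | ∑ m, A m α ≤ q * Stot A δ α x})

/-- The σ-algebra generated by the decision process `α ↦ δ_m(α)`, `α ∈ [0,1]`. -/
def procSigma {X : Type*} (δm : ℝ → X → ℝ) : MeasurableSpace X :=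
  ⨆ α ∈ Set.Icc (0:ℝ) 1, MeasurableSpace.comap (δm α) Real.measurableSpace

namespace SidakCore

variable {ι : Type*} [Fintype ι] [DecidableEq ι]

/-- number of p-values ≤ t, as a real. -/
def RR (p : ι → ℝ) (t : ℝ) : ℝ := ∑ j, if p j ≤ t then (1:ℝ) else 0

def RN (p : ι → ℝ) (t : ℝ) : ℕ := (Finset.univ.filter (fun j => p j ≤ t)).card

lemma RR_eq_RN (p : ι → ℝ) (t : ℝ) : RR p t = (RN p t : ℝ) := by
  simp [RR, RN]

lemma RR_nonneg (p : ι → ℝ) (t : ℝ) : 0 ≤ RR p t := by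
  apply Finset.sum_nonneg; intro j _; split <;> norm_num

lemma RR_le_card (p : ι → ℝ) (t : ℝ) : RR p t ≤ (Fintype.card ι : ℝ) := by
  rw [RR_eq_RN]
  exact_mod_cast (Finset.card_filter_le _ _)

lemma RR_mono (p : ι → ℝ) {t t' : ℝ} (h : t ≤ t') : RR p t ≤ RR p t' := by
  apply Finset.sum_le_sum; intro j _
  by_cases hj : p j ≤ t
  · rw [if_pos hj, if_pos (hj.trans h)]
  · rw [if_neg hj]; split <;> norm_num

def kst (q : ℝ) (p : ι → ℝ) : ℕ :=
  Nat.findGreatest (fun k => (k : ℝ) ≤ RR p (q * k / (Fintype.card ι : ℝ))) (Fintype.card ι)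

def Tst (q : ℝ) (p : ι → ℝ) : ℝ := q * (kst q p) / (Fintype.card ι : ℝ)

variable [Nonempty ι] {q : ℝ}

lemma card_pos' : (0:ℝ) < (Fintype.card ι : ℝ) := by
  exact_mod_cast Fintype.card_pos

lemma Tst_nonneg (hq0 : 0 ≤ q) (p : ι → ℝ) : 0 ≤ Tst q p := by
  unfold Tst
  positivity

lemma Tst_le_q (hq0 : 0 ≤ q) (p : ι → ℝ) : Tst q p ≤ q := by
  unfold Tst
  rw [div_le_iff₀ card_pos']
  have h1 : (kst q p : ℝ) ≤ (Fintype.card ι : ℝ) := by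
    exact_mod_cast Nat.findGreatest_le (Fintype.card ι)
  nlinarith [card_pos' (ι := ι)]

lemma Tst_spec (hq0 : 0 ≤ q) (p : ι → ℝ) :
    (Fintype.card ι : ℝ) * Tst q p ≤ q * RR p (Tst q p) := by
  have hM := card_pos' (ι := ι)
  have h : (kst q p : ℝ) ≤ RR p (Tst q p) :=
    Nat.findGreatest_spec (P := fun k => (k : ℝ) ≤ RR p (q * k / (Fintype.card ι : ℝ)))
      (m := 0) (Nat.zero_le _)
      (by simpa using RR_nonneg p (q * ((0:ℕ):ℝ) / (Fintype.card ι : ℝ)))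
  calc (Fintype.card ι : ℝ) * Tst q p = q * (kst q p) := by
        unfold Tst; field_simp
    _ ≤ q * RR p (Tst q p) := by nlinarith

lemma Tst_max (hq0 : 0 ≤ q) (p : ι → ℝ) {t : ℝ} (ht0 : 0 ≤ t)
    (h : (Fintype.card ι : ℝ) * t ≤ q * RR p t) : t ≤ Tst q p := by
  have hM := card_pos' (ι := ι)
  set k : ℕ := RN p t with hk
  have hkM : k ≤ Fintype.card ι := by
    exact (Finset.card_filter_le Finset.univ (fun j => p j ≤ t)).trans_eq Finset.card_univ
  have hRR : RR p t = (k:ℝ) := RR_eq_RN p t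
  have ht_le : t ≤ q * k / (Fintype.card ι : ℝ) := by
    rw [le_div_iff₀ card_pos']
    nlinarith [hRR ▸ h]
  have hpred : (k : ℝ) ≤ RR p (q * k / (Fintype.card ι : ℝ)) := by
    calc (k:ℝ) = RR p t := hRR.symm
      _ ≤ _ := RR_mono p ht_le
  have hle : k ≤ kst q p := Nat.le_findGreatest hkM hpred
  calc t ≤ q * k / (Fintype.card ι : ℝ) := ht_le
    _ ≤ q * (kst q p) / (Fintype.card ι : ℝ) := by
        gcongr
    _ = Tst q p := rfl



lemma RR_le_update (hq0 : 0 ≤ q) (p : ι → ℝ) (m : ι) {t : ℝ} (ht : 0 ≤ t) :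
    RR p t ≤ RR (update p m 0) t := by
  unfold RR
  apply Finset.sum_le_sum; intro j _
  rcases eq_or_ne j m with rfl | hj
  · rw [update_self, if_pos ht]; split <;> norm_num
  · rw [update_of_ne hj]

lemma RR_update_eq (p : ι → ℝ) (m : ι) {t : ℝ} (ht : 0 ≤ t) (hm : p m ≤ t) :
    RR (update p m 0) t = RR p t := by
  unfold RR
  apply Finset.sum_congr rfl; intro j _
  rcases eq_or_ne j m with rfl | hj
  · rw [update_self, if_pos ht, if_pos hm]
  · rw [update_of_ne hj]

lemma Tst_le_update (hq0 : 0 ≤ q) (p : ι → ℝ) (m : ι) :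
    Tst q p ≤ Tst q (update p m 0) := by
  apply Tst_max hq0 _ (Tst_nonneg hq0 p)
  calc (Fintype.card ι : ℝ) * Tst q p ≤ q * RR p (Tst q p) := Tst_spec hq0 p
    _ ≤ q * RR (update p m 0) (Tst q p) := by
        have := RR_le_update hq0 p m (Tst_nonneg hq0 p)
        nlinarith

/-- C1: the rescaled count at the leave-one-out threshold is below that threshold. -/
lemma C1 (hq0 : 0 ≤ q) (p : ι → ℝ) :
    q * RR p (Tst q p) / (Fintype.card ι : ℝ) ≤ Tst q p := by
  have hM := card_pos' (ι := ι)
  set t'' := q * RR p (Tst q p) / (Fintype.card ι : ℝ) with ht''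
  have ht0 : 0 ≤ t'' := by
    have := RR_nonneg p (Tst q p); positivity
  by_contra hcon
  push_neg at hcon
  have hmax : t'' ≤ Tst q p := by
    apply Tst_max hq0 _ ht0
    calc (Fintype.card ι : ℝ) * t'' = q * RR p (Tst q p) := by
          rw [ht'']; field_simp
      _ ≤ q * RR p t'' := by
          have := RR_mono p hcon.le; nlinarith
  exact absurd hmax (not_le.mpr hcon)

/-- if `p m ≤ Tst q p` then the leave-one-out threshold agrees. -/
lemma Tst_update_of_le (hq0 : 0 ≤ q) (p : ι → ℝ) (m : ι) (h : p m ≤ Tst q p) :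
    Tst q (update p m 0) = Tst q p := by
  refine le_antisymm ?_ (Tst_le_update hq0 p m)
  apply Tst_max hq0 _ (Tst_nonneg hq0 _)
  have h1 : p m ≤ Tst q (update p m 0) := h.trans (Tst_le_update hq0 p m)
  calc (Fintype.card ι : ℝ) * Tst q (update p m 0)
      ≤ q * RR (update p m 0) (Tst q (update p m 0)) := Tst_spec hq0 _
    _ = q * RR p (Tst q (update p m 0)) := by
        rw [RR_update_eq p m (Tst_nonneg hq0 _) h1]

/-- reverse implication: membership in the leave-one-out event implies rejection. -/
lemma le_Tst_of_le_c (hq0 : 0 ≤ q) (p : ι → ℝ) (m : ι)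
    (h : p m ≤ q * RR (update p m 0) (Tst q (update p m 0)) / (Fintype.card ι : ℝ)) :
    p m ≤ Tst q p := by
  have h1 : p m ≤ Tst q (update p m 0) := h.trans (C1 hq0 (update p m 0))
  have h2 : Tst q (update p m 0) ≤ Tst q p := by
    apply Tst_max hq0 _ (Tst_nonneg hq0 _)
    calc (Fintype.card ι : ℝ) * Tst q (update p m 0)
        ≤ q * RR (update p m 0) (Tst q (update p m 0)) := Tst_spec hq0 _
      _ = q * RR p (Tst q (update p m 0)) := by
          rw [RR_update_eq p m (Tst_nonneg hq0 _) h1]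
  exact h1.trans h2

/-- on the rejection event, `c_m` equals the threshold. -/
lemma c_eq_of_le (hq0 : 0 ≤ q) (p : ι → ℝ) (m : ι) (h : p m ≤ Tst q p) :
    q * RR (update p m 0) (Tst q (update p m 0)) / (Fintype.card ι : ℝ) = Tst q p := by
  have hM := card_pos' (ι := ι)
  have hT := Tst_update_of_le hq0 p m h
  have hR : RR (update p m 0) (Tst q (update p m 0)) = RR p (Tst q p) := by
    rw [hT, RR_update_eq p m (Tst_nonneg hq0 _) h]
  refine le_antisymm ?_ ?_
  · rw [hR]
    calc q * RR p (Tst q p) / (Fintype.card ι : ℝ)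
        = q * RR (update p m 0) (Tst q (update p m 0)) / (Fintype.card ι : ℝ) := by rw [hR]
      _ ≤ Tst q (update p m 0) := C1 hq0 _
      _ = Tst q p := hT
  · rw [hR, le_div_iff₀ hM]
    have := Tst_spec hq0 p
    nlinarith

/-- the leave-one-out count is at least 1. -/
lemma one_le_RR_update (hq0 : 0 ≤ q) (p : ι → ℝ) (m : ι) :
    (1:ℝ) ≤ RR (update p m 0) (Tst q (update p m 0)) := by
  unfold RR
  have hmem : m ∈ (Finset.univ : Finset ι) := Finset.mem_univ m
  have := Finset.single_le_sum (f := fun j => if update p m 0 j ≤ Tst q (update p m 0) then (1:ℝ) else 0)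
    (fun j _ => by split <;> norm_num) hmem
  simpa [update_self, Tst_nonneg hq0 (update p m 0)] using this

/-- Main pointwise identity (leave-one-out rewriting of each FDP term). -/
lemma term_eq (hq0 : 0 ≤ q) (p : ι → ℝ) (m : ι) :
    (if p m ≤ Tst q p then (1:ℝ) else 0) / RR p (Tst q p)
      = (if p m ≤ q * RR (update p m 0) (Tst q (update p m 0)) / (Fintype.card ι : ℝ)
          then (1:ℝ) else 0) / RR (update p m 0) (Tst q (update p m 0)) := by
  by_cases h : p m ≤ Tst q p
  · have hc := c_eq_of_le hq0 p m h
    have hT := Tst_update_of_le hq0 p m h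
    have hR : RR (update p m 0) (Tst q (update p m 0)) = RR p (Tst q p) := by
      rw [hT, RR_update_eq p m (Tst_nonneg hq0 _) h]
    rw [if_pos h, if_pos (hc ▸ h), hR]
  · rw [if_neg h, if_neg (fun hcon => h (le_Tst_of_le_c hq0 p m hcon)), zero_div, zero_div]

/-- decomposition over the (discrete) value of the leave-one-out count. -/
lemma term_decomp (hq0 : 0 ≤ q) (p : ι → ℝ) (m : ι) :
    (if p m ≤ Tst q p then (1:ℝ) else 0) / RR p (Tst q p)
      = ∑ k ∈ Finset.Icc 1 (Fintype.card ι),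
          if (RR (update p m 0) (Tst q (update p m 0)) = (k:ℝ)
              ∧ p m ≤ q * k / (Fintype.card ι : ℝ))
          then ((k:ℝ))⁻¹ else 0 := by
  rw [term_eq hq0 p m]
  set pm := update p m 0 with hpm
  set k0 : ℕ := RN pm (Tst q pm) with hk0
  have hRR : RR pm (Tst q pm) = (k0:ℝ) := RR_eq_RN pm _
  have h1k : 1 ≤ k0 := by
    have := one_le_RR_update hq0 p m
    rw [← hpm, hRR] at this; exact_mod_cast this
  have hkM : k0 ≤ Fintype.card ι := by
    exact (Finset.card_filter_le Finset.univ (fun j => pm j ≤ Tst q pm)).trans_eq Finset.card_univ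
  rw [Finset.sum_eq_single k0]
  · rw [hRR]
    by_cases h : p m ≤ q * k0 / (Fintype.card ι : ℝ)
    · rw [if_pos h, if_pos ⟨rfl, h⟩, one_div]
    · rw [if_neg h, if_neg (fun hc => h hc.2), zero_div]
  · intro k hk hne
    rw [if_neg]
    rintro ⟨h1, -⟩
    rw [hRR] at h1
    exact hne (Nat.cast_injective h1).symm
  · intro hk
    exact absurd (Finset.mem_Icc.mpr ⟨h1k, hkM⟩) hk



section Meas

lemma measurable_RR_fixed (t : ℝ) : Measurable fun p : ι → ℝ => RR p t := by
  unfold RR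
  apply Finset.measurable_sum
  intro j _
  exact Measurable.ite (measurableSet_le (measurable_pi_apply j) measurable_const)
    measurable_const measurable_const

lemma measurable_findGreatest (q : ℝ) (N : ℕ) :
    Measurable fun p : ι → ℝ =>
      Nat.findGreatest (fun k => (k : ℝ) ≤ RR p (q * k / (Fintype.card ι : ℝ))) N := by
  induction N with
  | zero => simpa using measurable_const
  | succ n ih =>
      simp only [Nat.findGreatest_succ]
      exact Measurable.ite
        (measurableSet_le measurable_const (measurable_RR_fixed _))
        measurable_const ih

lemma measurable_kst (q : ℝ) : Measurable (kst q : (ι → ℝ) → ℕ) :=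
  measurable_findGreatest q _

lemma measurable_Tst (q : ℝ) : Measurable (Tst q : (ι → ℝ) → ℝ) := by
  unfold Tst
  exact ((measurable_from_top.comp (measurable_kst q)).const_mul q).div_const _

lemma measurable_Kfun (q : ℝ) : Measurable fun p : ι → ℝ => RR p (Tst q p) := by
  unfold RR
  apply Finset.measurable_sum
  intro j _
  exact Measurable.ite
    (measurableSet_le (measurable_pi_apply j) (measurable_Tst q))
    measurable_const measurable_const

end Meas

section Pval

variable {X : Type*}



/-- rational grid for the p-value construction -/
abbrev Q01 : Type := (Set.Icc (0:ℚ) 1)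

instance : Nonempty Q01 := ⟨⟨0, by norm_num⟩⟩

/-- the p-value of a decision process: infimum of rational levels at which it rejects. -/
def pval (δm : ℝ → X → ℝ) (x : X) : ℝ :=
  ⨅ r : Q01, if δm (r : ℚ) x = 1 then ((r : ℚ) : ℝ) else 1

lemma pval_bddBelow (δm : ℝ → X → ℝ) (x : X) :
    BddBelow (Set.range fun r : Q01 => if δm (r : ℚ) x = 1 then ((r : ℚ) : ℝ) else 1) := by
  refine ⟨0, ?_⟩
  rintro y ⟨r, rfl⟩
  dsimp only
  split
  · exact_mod_cast r.2.1
  · norm_num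

lemma pval_nonneg (δm : ℝ → X → ℝ) (x : X) : 0 ≤ pval δm x := by
  apply le_ciInf
  intro r
  split
  · exact_mod_cast r.2.1
  · norm_num

lemma pval_le (δm : ℝ → X → ℝ) (x : X) (r : Q01) :
    pval δm x ≤ if δm (r : ℚ) x = 1 then ((r : ℚ) : ℝ) else 1 :=
  ciInf_le (pval_bddBelow δm x) r

lemma pval_le_one (δm : ℝ → X → ℝ) (x : X) : pval δm x ≤ 1 := by
  have := pval_le δm x ⟨1, by norm_num⟩
  simpa using this.trans (by split <;> norm_num)

/-- `pval` is measurable w.r.t. the process σ-algebra. -/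
lemma pval_measurable (δm : ℝ → X → ℝ) :
    Measurable[procSigma δm] (pval δm) := by
  apply Measurable.iInf
  intro r
  have hr : ((r:ℚ):ℝ) ∈ Set.Icc (0:ℝ) 1 := by
    constructor
    · exact_mod_cast r.2.1
    · exact_mod_cast r.2.2
  have hδ : Measurable[procSigma δm] (δm ((r:ℚ):ℝ)) := by
    have h1 : Measurable[MeasurableSpace.comap (δm ((r:ℚ):ℝ)) Real.measurableSpace]
        (δm ((r:ℚ):ℝ)) := fun s hs => ⟨s, hs, rfl⟩
    exact h1.mono (le_iSup₂ (f := fun α (_ : α ∈ Set.Icc (0:ℝ) 1) =>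
      MeasurableSpace.comap (δm α) Real.measurableSpace) _ hr) le_rfl
  exact Measurable.ite (hδ (measurableSet_singleton 1)) measurable_const measurable_const

/-- Representation: for good `x`, the process is the threshold process of its p-value. -/
lemma pval_rep (δm : ℝ → X → ℝ) (x : X)
    (hvals : ∀ α ∈ Set.Icc (0:ℝ) 1, δm α x = 0 ∨ δm α x = 1)
    (hmono : MonotoneOn (fun α => δm α x) (Set.Icc 0 1))
    (hrc : ∀ α ∈ Set.Ico (0:ℝ) 1, ContinuousWithinAt (fun β => δm β x) (Set.Ici α) α)
    (h0 : δm 0 x = 0) (h1 : δm 1 x = 1) :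
    ∀ t ∈ Set.Icc (0:ℝ) 1, δm t x = if pval δm x ≤ t then 1 else 0 := by
  -- first: δ = 1 → pval ≤ t
  have fwd : ∀ t ∈ Set.Icc (0:ℝ) 1, δm t x = 1 → pval δm x ≤ t := by
    intro t ht hδ
    rcases eq_or_lt_of_le ht.2 with rfl | htlt
    · exact pval_le_one δm x
    by_contra hcon
    push_neg at hcon
    obtain ⟨r, hr1, hr2⟩ := exists_rat_btwn (lt_min hcon htlt)
    rw [lt_min_iff] at hr2
    have hr0 : (0:ℚ) ≤ r := by
      have : (0:ℝ) ≤ (r:ℝ) := ht.1.trans hr1.le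
      exact_mod_cast this
    have hrle1 : (r:ℚ) ≤ 1 := by
      have : (r:ℝ) ≤ 1 := hr2.2.le
      exact_mod_cast this
    have hrIcc : ((r:ℚ):ℝ) ∈ Set.Icc (0:ℝ) 1 := by
      constructor
      · exact_mod_cast hr0
      · exact_mod_cast hrle1
    have hmono' : δm t x ≤ δm (r:ℝ) x := by
      have := hmono ht hrIcc hr1.le
      simpa using this
    have hδr : δm (r:ℝ) x = 1 := by
      rcases hvals _ hrIcc with h | h
      · rw [hδ] at hmono'; rw [h] at hmono'; linarith
      · exact h
    have := pval_le δm x ⟨r, ⟨hr0, hrle1⟩⟩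
    rw [if_pos hδr] at this
    exact absurd (this.trans_lt hr2.1) (lt_irrefl _)
  -- second: pval ≤ t → δ = 1
  have bwd : ∀ t ∈ Set.Icc (0:ℝ) 1, pval δm x ≤ t → δm t x = 1 := by
    intro t ht hp
    rcases eq_or_lt_of_le ht.2 with rfl | htlt
    · exact h1
    -- δ = 1 on (t, 1]
    have hone : ∀ β ∈ Set.Ioo t 1, δm β x = 1 := by
      intro β hβ
      have hplt : pval δm x < β := hp.trans_lt hβ.1
      obtain ⟨r, hr⟩ := exists_lt_of_ciInf_lt hplt
      have hrval : δm ((r:ℚ):ℝ) x = 1 ∧ ((r:ℚ):ℝ) < β := by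
        by_cases hc : δm ((r:ℚ):ℝ) x = 1
        · rw [if_pos hc] at hr; exact ⟨hc, hr⟩
        · rw [if_neg hc] at hr; exact absurd (hβ.2.trans_le (by norm_num)) (not_lt.mpr hr.le)
      have hrIcc : ((r:ℚ):ℝ) ∈ Set.Icc (0:ℝ) 1 := by
        constructor
        · exact_mod_cast r.2.1
        · exact_mod_cast r.2.2
      have hβIcc : β ∈ Set.Icc (0:ℝ) 1 := ⟨ht.1.trans hβ.1.le, hβ.2.le⟩
      have := hmono hrIcc hβIcc hrval.2.le
      simp only at this
      rw [hrval.1] at this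
      rcases hvals _ hβIcc with h | h
      · rw [h] at this; linarith
      · exact h
    -- right continuity
    have hten : Filter.Tendsto (fun β => δm β x) (nhdsWithin t (Set.Ioi t)) (nhds (δm t x)) :=
      (hrc t ⟨ht.1, htlt⟩).mono_left (nhdsWithin_mono t (Set.Ioi_subset_Ici le_rfl))
    have heq : (fun β => δm β x) =ᶠ[nhdsWithin t (Set.Ioi t)] fun _ => (1:ℝ) := by
      filter_upwards [Ioo_mem_nhdsGT_of_mem (Set.mem_Ico.mpr ⟨le_rfl, htlt⟩)] with β hβ
      exact hone β hβ
    have hten1 : Filter.Tendsto (fun β => δm β x) (nhdsWithin t (Set.Ioi t)) (nhds 1) :=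
      Filter.Tendsto.congr' heq.symm tendsto_const_nhds
    exact tendsto_nhds_unique hten hten1
  intro t ht
  by_cases hp : pval δm x ≤ t
  · rw [if_pos hp]; exact bwd t ht hp
  · rw [if_neg hp]
    rcases hvals t ht with h | h
    · exact h
    · exact absurd (fwd t ht h) hp

end Pval

section Indep
open ProbabilityTheory

variable {X : Type*} [mX : MeasurableSpace X] {ι : Type*} [Fintype ι] [DecidableEq ι]

lemma indep_combine (P : Measure X) [IsProbabilityMeasure P]
    (M0 M1 : Finset ι) (σ : ι → MeasurableSpace X) (hle : ∀ j, σ j ≤ mX)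
    (hD3a : Indep (⨆ j ∈ M0, σ j) (⨆ j ∈ M1, σ j) P)
    (hD3b : iIndep (fun m : {m // m ∈ M0} => σ (m : ι)) P)
    (m : ι) (hm : m ∈ M0) :
    Indep (σ m) ((⨆ j ∈ M0.erase m, σ j) ⊔ (⨆ j ∈ M1, σ j)) P := by
  classical
  set κ := {a // a ∈ M0} ⊕ Unit with hκ
  set ms : κ → MeasurableSpace X :=
    Sum.elim (fun a : {a // a ∈ M0} => σ (a : ι)) (fun _ => ⨆ j ∈ M1, σ j) with hms
  have h_le : ∀ i, ms i ≤ mX := by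
    rintro (a | u)
    · exact hle _
    · exact iSup₂_le fun j _ => hle j
  -- joint independence of the combined family
  have hii : iIndep ms P := by
    rw [iIndep_iff]
    intro s f hf
    set A := ⋂ a ∈ s.toLeft, f (Sum.inl a) with hA
    set B := ⋂ b ∈ s.toRight, f (Sum.inr b) with hB
    have hsplit : ⋂ i ∈ s, f i = A ∩ B := by
      ext x
      simp only [Set.mem_iInter, Set.mem_inter_iff, hA, hB, Finset.mem_toLeft,
        Finset.mem_toRight]
      constructor
      · intro h
        exact ⟨fun a ha => h _ ha, fun b hb => h _ hb⟩
      · rintro ⟨hAx, hBx⟩ i hi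
        cases i with
        | inl a => exact hAx a hi
        | inr b => exact hBx b hi
    have hA_meas : MeasurableSet[⨆ j ∈ M0, σ j] A := by
      apply Finset.measurableSet_biInter
      intro a ha
      exact (le_iSup₂ (f := fun j (_ : j ∈ M0) => σ j) (a:ι) a.2) _
        (hf _ (Finset.mem_toLeft.mp ha))
    have hB_meas : MeasurableSet[⨆ j ∈ M1, σ j] B := by
      apply Finset.measurableSet_biInter
      intro b hb
      exact hf _ (Finset.mem_toRight.mp hb)
    have step1 : P (A ∩ B) = P A * P B :=
      (Indep_iff _ _ _).1 hD3a A B hA_meas hB_meas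
    have hPA : P A = ∏ a ∈ s.toLeft, P (f (Sum.inl a)) :=
      hD3b.meas_biInter (fun a ha => hf _ (Finset.mem_toLeft.mp ha))
    have hPB : P B = ∏ b ∈ s.toRight, P (f (Sum.inr b)) := by
      rcases Finset.eq_empty_or_nonempty s.toRight with he | ⟨b, hb⟩
      · rw [he]
        simp [hB, he]
      · have hsing : s.toRight = {b} := by
          apply Finset.eq_singleton_iff_unique_mem.mpr
          exact ⟨hb, fun c _ => Subsingleton.elim c b⟩
        rw [hsing, hB, hsing, Finset.set_biInter_singleton, Finset.prod_singleton]
    have hprod : ∏ i ∈ s, P (f i)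
        = (∏ a ∈ s.toLeft, P (f (Sum.inl a))) * ∏ b ∈ s.toRight, P (f (Sum.inr b)) := by
      conv_lhs => rw [← Finset.toLeft_disjSum_toRight (u := s)]
      rw [Finset.prod_disjSum]
    rw [hsplit, step1, hPA, hPB, hprod]
  -- single out index `inl ⟨m, hm⟩`
  have h2 := indep_iSup_of_disjoint h_le hii
    (S := {(Sum.inl ⟨m, hm⟩ : κ)}) (T := {(Sum.inl ⟨m, hm⟩ : κ)}ᶜ) disjoint_compl_right
  have hS : (⨆ i ∈ ({(Sum.inl ⟨m, hm⟩ : κ)} : Set κ), ms i) = σ m := by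
    simp only [Set.mem_singleton_iff, iSup_iSup_eq_left]
    rfl
  rw [hS] at h2
  have hle' : (⨆ j ∈ M0.erase m, σ j) ⊔ (⨆ j ∈ M1, σ j)
      ≤ ⨆ i ∈ ({(Sum.inl ⟨m, hm⟩ : κ)} : Set κ)ᶜ, ms i := by
    apply sup_le
    · apply iSup₂_le
      intro j hj
      have hj0 : j ∈ M0 := Finset.mem_of_mem_erase hj
      have hne : (Sum.inl ⟨j, hj0⟩ : κ) ∈ ({(Sum.inl ⟨m, hm⟩ : κ)} : Set κ)ᶜ := by
        simp only [Set.mem_compl_iff, Set.mem_singleton_iff]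
        intro hcon
        apply Finset.ne_of_mem_erase hj
        simpa using congrArg (fun i : κ => Sum.elim (fun a : {a // a ∈ M0} => (a:ι)) (fun _ => m) i) hcon
      exact le_iSup₂ (f := fun i (_ : i ∈ ({(Sum.inl ⟨m, hm⟩ : κ)} : Set κ)ᶜ) => ms i) _ hne
    · have hne : (Sum.inr () : κ) ∈ ({(Sum.inl ⟨m, hm⟩ : κ)} : Set κ)ᶜ := by
        simp
      exact le_iSup₂ (f := fun i (_ : i ∈ ({(Sum.inl ⟨m, hm⟩ : κ)} : Set κ)ᶜ) => ms i) _ hne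
  rw [Indep_iff] at h2 ⊢
  intro t1 t2 ht1 ht2
  exact h2 t1 t2 ht1 (hle' _ ht2)

end Indep

section Pow

variable {M : ℕ} (hM : 0 < M)
include hM

lemma A_mem {α : ℝ} (hα : α ∈ Set.Icc (0:ℝ) 1) :
    1 - (1-α) ^ ((M:ℝ)⁻¹) ∈ Set.Icc (0:ℝ) 1 := by
  have h0 : (0:ℝ) ≤ 1 - α := by linarith [hα.2]
  have h1 : 1 - α ≤ 1 := by linarith [hα.1]
  have hc : (0:ℝ) < (M:ℝ)⁻¹ := by positivity
  constructor
  · have := Real.rpow_le_one h0 h1 hc.le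
    linarith
  · have := Real.rpow_nonneg h0 ((M:ℝ)⁻¹)
    linarith

lemma B_mem {t : ℝ} (ht : t ∈ Set.Icc (0:ℝ) 1) :
    1 - (1-t) ^ M ∈ Set.Icc (0:ℝ) 1 := by
  have h0 : (0:ℝ) ≤ 1 - t := by linarith [ht.2]
  have h1 : 1 - t ≤ 1 := by linarith [ht.1]
  constructor
  · have := pow_le_one₀ h0 h1 (n := M)
    linarith
  · have := pow_nonneg h0 M
    linarith

lemma A_B {t : ℝ} (ht : t ∈ Set.Icc (0:ℝ) 1) :
    1 - (1 - (1 - (1-t) ^ M)) ^ ((M:ℝ)⁻¹) = t := by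
  have h0 : (0:ℝ) ≤ 1 - t := by linarith [ht.2]
  have hMne : (M:ℝ) ≠ 0 := by positivity
  have : (1 - (1 - (1-t) ^ M)) = (1-t) ^ M := by ring
  rw [this, ← Real.rpow_natCast (1-t) M, ← Real.rpow_mul h0]
  rw [mul_inv_cancel₀ hMne, Real.rpow_one]
  ring

lemma B_A {α : ℝ} (hα : α ∈ Set.Icc (0:ℝ) 1) :
    1 - (1 - (1 - (1-α) ^ ((M:ℝ)⁻¹))) ^ M = α := by
  have h0 : (0:ℝ) ≤ 1 - α := by linarith [hα.2]
  have hMne : (M:ℝ) ≠ 0 := by positivity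
  have h1 : (1 - (1 - (1-α) ^ ((M:ℝ)⁻¹))) = (1-α) ^ ((M:ℝ)⁻¹) := by ring
  rw [h1, ← Real.rpow_natCast ((1-α) ^ ((M:ℝ)⁻¹)) M, ← Real.rpow_mul h0]
  rw [inv_mul_cancel₀ hMne, Real.rpow_one]
  ring

lemma B_mono {t t' : ℝ} (ht : t ∈ Set.Icc (0:ℝ) 1) (ht' : t' ∈ Set.Icc (0:ℝ) 1)
    (h : t ≤ t') : 1 - (1-t) ^ M ≤ 1 - (1-t') ^ M := by
  have := pow_le_pow_left₀ (by linarith [ht'.2] : (0:ℝ) ≤ 1 - t') (by linarith : 1 - t' ≤ 1 - t) M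
  linarith

end Pow
end SidakCore


/-- **Šidák FDR property**: the FDR of `δ*(q; Δ, A^S)` is at most `q`, for every
partition into true nulls `𝓜₀` and true alternatives `𝓜₁`. -/
theorem sidak_fdr_property
    {X ι : Type*} [MeasurableSpace X] [Fintype ι] [DecidableEq ι] [Nonempty ι]
    (P : Measure X) [IsProbabilityMeasure P]
    (M0 M1 : Finset ι) (hpart : M0 ∪ M1 = Finset.univ) (hdisj : Disjoint M0 M1)
    (δ : ι → ℝ → X → ℝ)
    (hmeas : ∀ m, ∀ α ∈ Set.Icc (0:ℝ) 1, Measurable (δ m α))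
    (hvals : ∀ m, ∀ α ∈ Set.Icc (0:ℝ) 1, ∀ x, δ m α x = 0 ∨ δ m α x = 1)
    -- (D1)
    (hD1 : ∀ m, ∀ᵐ x ∂P, δ m 0 x = 0 ∧ δ m 1 x = 1)
    -- (D2)
    (hD2 : ∀ᵐ x ∂P, ∀ m, MonotoneOn (fun α => δ m α x) (Set.Icc 0 1) ∧
      ∀ α ∈ Set.Ico (0:ℝ) 1, ContinuousWithinAt (fun β => δ m β x) (Set.Ici α) α)
    -- (D3)
    (hD3a : Indep (⨆ m ∈ M0, procSigma (δ m)) (⨆ m ∈ M1, procSigma (δ m)) P)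
    (hD3b : iIndep (fun m : {m // m ∈ M0} => procSigma (δ (m : ι))) P)
    -- (D4)
    (hD4 : ∀ m ∈ M0, ∀ α ∈ Set.Icc (0:ℝ) 1, ∫ x, δ m α x ∂P = α)
    (q : ℝ) (hq : q ∈ Set.Icc (0:ℝ) 1) :
    ∫ x, Fprop M0 (sidakA ι) δ (alphaStar (sidakA ι) δ q x) x ∂P ≤ q := by

  classical
  obtain ⟨hq0, hq1⟩ := hq
  set M := Fintype.card ι with hMdef
  have hMpos : 0 < M := Fintype.card_pos
  have hMr : (0:ℝ) < (M:ℝ) := by exact_mod_cast hMpos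
  set σa : ι → MeasurableSpace X := fun j => procSigma (δ j) with hσa
  have hσle : ∀ j, σa j ≤ ‹MeasurableSpace X› := by
    intro j
    apply iSup₂_le
    intro α hα
    exact measurable_iff_comap_le.mp (hmeas j α hα)
  set pv : X → ι → ℝ := fun x j => SidakCore.pval (δ j) x with hpv
  have hpv_meas : ∀ j, Measurable[σa j] (fun x => pv x j) := fun j =>
    SidakCore.pval_measurable (δ j)
  have hpv_amb : ∀ j, Measurable (fun x => pv x j) := fun j =>
    (hpv_meas j).mono (hσle j) le_rfl
  -- good set representation
  have hG : ∀ᵐ x ∂P, ∀ j, ∀ t ∈ Set.Icc (0:ℝ) 1, δ j t x = if pv x j ≤ t then 1 else 0 := by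
    have h1 : ∀ᵐ x ∂P, ∀ j, δ j 0 x = 0 ∧ δ j 1 x = 1 := ae_all_iff.mpr hD1
    filter_upwards [hD2, h1] with x h2 h1'
    intro j
    exact SidakCore.pval_rep (δ j) x (fun α hα => hvals j α hα x)
      (h2 j).1 (h2 j).2 (h1' j).1 (h1' j).2
  set FDP : (ι → ℝ) → ℝ := fun p =>
    ∑ m ∈ M0, (if p m ≤ SidakCore.Tst q p then (1:ℝ) else 0)
      / SidakCore.RR p (SidakCore.Tst q p) with hFDP
  -- Step A: a.e. identification of the FDP
  have hstep1 : ∀ᵐ x ∂P,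
      Fprop M0 (sidakA ι) δ (alphaStar (sidakA ι) δ q x) x = FDP (pv x) := by
    filter_upwards [hG] with x hx
    set p : ι → ℝ := pv x with hpx
    set T := SidakCore.Tst q p with hT
    have hT0 : 0 ≤ T := SidakCore.Tst_nonneg hq0 p
    have hTq : T ≤ q := SidakCore.Tst_le_q hq0 p
    have hT1 : T ≤ 1 := hTq.trans hq1
    set α0 : ℝ := 1 - (1 - T) ^ M with hα0def
    have hα0 : α0 ∈ Set.Icc (0:ℝ) 1 := SidakCore.B_mem hMpos ⟨hT0, hT1⟩
    have hAα0 : (1 - (1 - α0) ^ ((M:ℝ)⁻¹)) = T := SidakCore.A_B hMpos ⟨hT0, hT1⟩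
    have hsidak : ∀ j α, sidakA ι j α = 1 - (1-α) ^ ((M:ℝ)⁻¹) := fun j α => rfl
    have hStot : ∀ α ∈ Set.Icc (0:ℝ) 1,
        Stot (sidakA ι) δ α x = SidakCore.RR p (1 - (1-α) ^ ((M:ℝ)⁻¹)) := by
      intro α hα
      unfold Stot SidakCore.RR
      apply Finset.sum_congr rfl
      intro j _
      rw [hsidak j α]
      exact hx j _ (SidakCore.A_mem hMpos hα)
    have hsum : ∀ α : ℝ, ∑ m, sidakA ι m α = (M:ℝ) * (1 - (1-α) ^ ((M:ℝ)⁻¹)) := by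
      intro α
      simp only [hsidak]
      rw [Finset.sum_const, Finset.card_univ, nsmul_eq_mul, hMdef]
    have hgreat : IsGreatest
        (insert 0 {α ∈ Set.Icc (0:ℝ) 1 | ∑ m, sidakA ι m α ≤ q * Stot (sidakA ι) δ α x})
        α0 := by
      constructor
      · apply Set.mem_insert_of_mem
        refine ⟨hα0, ?_⟩
        rw [hsum, hStot α0 hα0, hAα0]
        exact SidakCore.Tst_spec hq0 p
      · rintro β hβ
        rcases Set.mem_insert_iff.mp hβ with rfl | ⟨hβIcc, hβcond⟩
        · exact hα0.1
        · rw [hsum, hStot β hβIcc] at hβcond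
          have hAβ := SidakCore.A_mem hMpos hβIcc
          have hle : 1 - (1-β) ^ ((M:ℝ)⁻¹) ≤ T := SidakCore.Tst_max hq0 p hAβ.1 hβcond
          calc β = 1 - (1 - (1 - (1-β) ^ ((M:ℝ)⁻¹))) ^ M := (SidakCore.B_A hMpos hβIcc).symm
            _ ≤ α0 := SidakCore.B_mono hMpos hAβ ⟨hT0, hT1⟩ hle
    have hαstar : alphaStar (sidakA ι) δ q x = α0 := by
      unfold alphaStar
      exact hgreat.csSup_eq
    rw [hαstar]
    unfold Fprop
    have hSt : Stot (sidakA ι) δ α0 x = SidakCore.RR p T := by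
      rw [hStot α0 hα0, hAα0]
    have hSz : Szero M0 (sidakA ι) δ α0 x = ∑ m ∈ M0, (if p m ≤ T then (1:ℝ) else 0) := by
      unfold Szero
      apply Finset.sum_congr rfl
      intro m _
      rw [hsidak m α0, hx m _ (SidakCore.A_mem hMpos hα0), hAα0]
    rw [hSt, hSz, hFDP]
    by_cases hpos : 0 < SidakCore.RR p T
    · rw [if_pos hpos, Finset.sum_div]
    · rw [if_neg hpos]
      have hz : SidakCore.RR p T = 0 :=
        le_antisymm (not_lt.mp hpos) (SidakCore.RR_nonneg p T)
      beta_reduce; rw [← hT]; simp [hz]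
  rw [integral_congr_ae hstep1]
  -- Step B: pointwise decomposition into indicator pieces
  set Aset : ι → ℕ → Set X := fun m k =>
    {x | SidakCore.RR (Function.update (pv x) m 0)
        (SidakCore.Tst q (Function.update (pv x) m 0)) = (k:ℝ)} with hAset
  set Bset : ι → ℕ → Set X := fun m k => {x | pv x m ≤ q * k / (M:ℝ)} with hBset
  have hpt : ∀ x, FDP (pv x) = ∑ m ∈ M0, ∑ k ∈ Finset.Icc 1 M,
      ((Aset m k ∩ Bset m k).indicator (fun _ => ((k:ℝ))⁻¹)) x := by
    intro x
    rw [hFDP]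
    apply Finset.sum_congr rfl
    intro m _
    rw [SidakCore.term_decomp hq0 (pv x) m, hMdef]
    apply Finset.sum_congr rfl
    intro k _
    rw [Set.indicator_apply]
    refine if_congr ?_ rfl rfl
    constructor
    · rintro ⟨h1, h2⟩
      exact ⟨h1, h2⟩
    · rintro ⟨h1, h2⟩
      exact ⟨h1, h2⟩
  rw [integral_congr_ae (Filter.Eventually.of_forall hpt)]
  -- measurability facts
  have hwv_meas : ∀ m : ι, ∀ mβ : MeasurableSpace X, (∀ j, j ≠ m → σa j ≤ mβ) →
      Measurable[mβ] (fun x => Function.update (pv x) m 0) := by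
    intro m mβ hβ
    apply measurable_pi_lambda
    intro j
    by_cases hj : j = m
    · subst hj
      simp only [Function.update_self]
      exact measurable_const
    · have : (fun x => Function.update (pv x) m 0 j) = fun x => pv x j := by
        funext x
        rw [Function.update_of_ne hj]
      rw [this]
      exact (hpv_meas j).mono (hβ j hj) le_rfl
  have hσa_amb : ∀ j : ι, (j ≠ j) ∨ True := fun _ => Or.inr trivial
  have hA_amb : ∀ m k, MeasurableSet (Aset m k) := by
    intro m k
    have hw : Measurable (fun x => Function.update (pv x) m 0) :=
      hwv_meas m _ (fun j _ => hσle j)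
    exact hw ((SidakCore.measurable_Kfun q) (measurableSet_singleton ((k:ℝ))))
  have hB_σ : ∀ m k, MeasurableSet[σa m] (Bset m k) := by
    intro m k
    exact (hpv_meas m) measurableSet_Iic
  have hB_amb : ∀ m k, MeasurableSet (Bset m k) := fun m k => hσle m _ (hB_σ m k)
  -- independence
  have hind : ∀ m ∈ M0, ∀ k, P (Aset m k ∩ Bset m k) = P (Aset m k) * P (Bset m k) := by
    intro m hm k
    have hcomb := SidakCore.indep_combine P M0 M1 σa hσle hD3a hD3b m hm
    have hGm : MeasurableSet[(⨆ j ∈ M0.erase m, σa j) ⊔ (⨆ j ∈ M1, σa j)] (Aset m k) := by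
      have hw : Measurable[(⨆ j ∈ M0.erase m, σa j) ⊔ (⨆ j ∈ M1, σa j)]
          (fun x => Function.update (pv x) m 0) := by
        apply hwv_meas m
        intro j hj
        have hjmem : j ∈ M0 ∪ M1 := hpart ▸ Finset.mem_univ j
        rcases Finset.mem_union.mp hjmem with hj0 | hj1
        · exact le_trans (le_iSup₂ (f := fun i (_ : i ∈ M0.erase m) => σa i) j
            (Finset.mem_erase.mpr ⟨hj, hj0⟩)) le_sup_left
        · exact le_trans (le_iSup₂ (f := fun i (_ : i ∈ M1) => σa i) j hj1) le_sup_right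
      exact hw ((SidakCore.measurable_Kfun q) (measurableSet_singleton ((k:ℝ))))
    have := (Indep_iff _ _ _).1 hcomb (Bset m k) (Aset m k) (hB_σ m k) hGm
    rw [Set.inter_comm, this, mul_comm]
  -- value of P (Bset m k)
  have hPB : ∀ m ∈ M0, ∀ k ∈ Finset.Icc 1 M, (P (Bset m k)).toReal = q * k / (M:ℝ) := by
    intro m hm k hk
    obtain ⟨hk1, hkM⟩ := Finset.mem_Icc.mp hk
    set v : ℝ := q * k / (M:ℝ) with hv
    have hvIcc : v ∈ Set.Icc (0:ℝ) 1 := by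
      constructor
      · positivity
      · rw [hv, div_le_one hMr]
        have : (k:ℝ) ≤ (M:ℝ) := by exact_mod_cast hkM
        nlinarith
    have hae : Bset m k =ᵐ[P] {x | δ m v x = 1} := by
      filter_upwards [hG] with x hx
      have hrep := hx m v hvIcc
      show (x ∈ Bset m k) = (x ∈ {x | δ m v x = 1})
      apply propext
      simp only [hBset, Set.mem_setOf_eq]
      constructor
      · intro h
        rw [hrep, if_pos h]
      · intro h
        by_contra hcon
        rw [hrep, if_neg hcon] at h
        norm_num at h
    have hmeq : P (Bset m k) = P {x | δ m v x = 1} := measure_congr hae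
    have hδind : (fun x => δ m v x) = Set.indicator {x | δ m v x = 1} (fun _ => (1:ℝ)) := by
      funext y
      rw [Set.indicator_apply]
      by_cases h : y ∈ {x | δ m v x = 1}
      · rw [if_pos h]; exact h
      · rw [if_neg h]
        rcases hvals m v hvIcc y with h0 | h1
        · exact h0
        · exact absurd h1 h
    have hint := hD4 m hm v hvIcc
    rw [hδind] at hint
    rw [integral_indicator_const (1:ℝ)
      (show MeasurableSet {x | δ m v x = 1} from (hmeas m v hvIcc) (measurableSet_singleton 1))] at hint
    · rw [hmeq]
      rw [smul_eq_mul, mul_one] at hint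
      exact hint
  -- integrability of indicator pieces
  have hint_piece : ∀ m ∈ M0, ∀ k ∈ Finset.Icc 1 M,
      Integrable ((Aset m k ∩ Bset m k).indicator (fun _ => ((k:ℝ))⁻¹)) P :=
    fun m _ k _ => (integrable_const _).indicator ((hA_amb m k).inter (hB_amb m k))
  rw [integral_finset_sum _
    (fun m hm => integrable_finset_sum _ (fun k hk => hint_piece m hm k hk))]
  have hbound : ∀ m ∈ M0,
      (∫ x, ∑ k ∈ Finset.Icc 1 M,
        ((Aset m k ∩ Bset m k).indicator (fun _ => ((k:ℝ))⁻¹)) x ∂P) ≤ q / (M:ℝ) := by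
    intro m hm
    rw [integral_finset_sum _ (fun k hk => hint_piece m hm k hk)]
    have hterm : ∀ k ∈ Finset.Icc 1 M,
        (∫ x, ((Aset m k ∩ Bset m k).indicator (fun _ => ((k:ℝ))⁻¹)) x ∂P)
          = (P (Aset m k)).toReal * (q / (M:ℝ)) := by
      intro k hk
      obtain ⟨hk1, hkM⟩ := Finset.mem_Icc.mp hk
      have hkr : (0:ℝ) < (k:ℝ) := by exact_mod_cast hk1
      rw [integral_indicator_const _ ((hA_amb m k).inter (hB_amb m k)), smul_eq_mul, measureReal_def,
        hind m hm k, ENNReal.toReal_mul, hPB m hm k hk]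
      field_simp
    rw [Finset.sum_congr rfl hterm, ← Finset.sum_mul]
    have hsumA : ∑ k ∈ Finset.Icc 1 M, (P (Aset m k)).toReal ≤ 1 := by
      have hdisj' : (↑(Finset.Icc 1 M) : Set ℕ).PairwiseDisjoint (Aset m) := by
        intro k _ k' _ hne
        apply Set.disjoint_left.mpr
        intro x hx1 hx2
        apply hne
        have h1 : SidakCore.RR (Function.update (pv x) m 0)
            (SidakCore.Tst q (Function.update (pv x) m 0)) = (k:ℝ) := hx1
        have h2 : SidakCore.RR (Function.update (pv x) m 0)
            (SidakCore.Tst q (Function.update (pv x) m 0)) = (k':ℝ) := hx2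
        have : (k:ℝ) = (k':ℝ) := by rw [← h1, h2]
        exact_mod_cast this
      have h1 : ∑ k ∈ Finset.Icc 1 M, P (Aset m k) = P (⋃ k ∈ Finset.Icc 1 M, Aset m k) :=
        (measure_biUnion_finset hdisj' (fun k _ => hA_amb m k)).symm
      calc ∑ k ∈ Finset.Icc 1 M, (P (Aset m k)).toReal
          = (∑ k ∈ Finset.Icc 1 M, P (Aset m k)).toReal :=
            (ENNReal.toReal_sum (fun a _ => measure_ne_top P _)).symm
        _ ≤ 1 := by
            rw [h1]
            have := prob_le_one (μ := P) (s := ⋃ k ∈ Finset.Icc 1 M, Aset m k)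
            simpa using ENNReal.toReal_mono (by simp) this
    have hqM : (0:ℝ) ≤ q / (M:ℝ) := by positivity
    calc (∑ k ∈ Finset.Icc 1 M, (P (Aset m k)).toReal) * (q / (M:ℝ))
        ≤ 1 * (q / (M:ℝ)) := mul_le_mul_of_nonneg_right hsumA hqM
      _ = q / (M:ℝ) := one_mul _
  calc ∑ m ∈ M0, ∫ x, ∑ k ∈ Finset.Icc 1 M,
        ((Aset m k ∩ Bset m k).indicator (fun _ => ((k:ℝ))⁻¹)) x ∂P
      ≤ ∑ _m ∈ M0, q / (M:ℝ) := Finset.sum_le_sum hbound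
    _ = (M0.card : ℝ) * (q / (M:ℝ)) := by rw [Finset.sum_const, nsmul_eq_mul]
    _ ≤ q := by
        have hcard : (M0.card : ℝ) ≤ (M:ℝ) := by
          have : M0.card ≤ M := hMdef ▸ (Finset.card_le_univ M0)
          exact_mod_cast this
        have hfield : (M:ℝ) * (q / (M:ℝ)) = q := by field_simp
        have hqM : (0:ℝ) ≤ q / (M:ℝ) := by positivity
        nlinarith

end
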